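/- Let f be holomorphic on ℂ \ {0} and suppose f maps the open right half-plane Π into Π, the open left half-plane −Π into −Π, the open upper half-plane iΠ into iΠ, and the open lower half-plane −iΠ into −iΠ. Then there exists a real number α > 0 such that f(z) = α·z for all z ∈ ℂ \ {0}. -/

import Mathlib

open Complex Set Bornology Filter Real Topology

/-- If `w` has positive real part then `|(w-1)/(w+1)| ≤ 1`. -/
lemma aux_cayley_le {w : ℂ} (hw : 0 < w.re) : ‖(w - 1) / (w + 1)‖ ≤ 1 := by
  have hne : (w + 1) ≠ 0 := by
    intro h
    have := congrArg Complex.re h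
    simp at this
    linarith
  have hpos : 0 < ‖w + 1‖ := norm_pos_iff.mpr hne
  rw [norm_div, div_le_one hpos, Complex.norm_def, Complex.norm_def]
  apply Real.sqrt_le_sqrt
  simp only [Complex.normSq_apply, Complex.sub_re, Complex.sub_im, Complex.add_re,
    Complex.add_im, Complex.one_re, Complex.one_im]
  nlinarith

/-- If `f` is holomorphic on `ℂ \ {0}` and maps each of the four open half-planes
(right, left, upper, lower) into itself, then `f z = α z` for some real `α > 0`. -/
theorem stmt_0 (f : ℂ → ℂ)
    (hf : DifferentiableOn ℂ f {(0 : ℂ)}ᶜ)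
    (hR : ∀ z : ℂ, 0 < z.re → 0 < (f z).re)
    (hL : ∀ z : ℂ, z.re < 0 → (f z).re < 0)
    (hU : ∀ z : ℂ, 0 < z.im → 0 < (f z).im)
    (hD : ∀ z : ℂ, z.im < 0 → (f z).im < 0) :
    ∃ α : ℝ, 0 < α ∧ ∀ z : ℂ, z ≠ 0 → f z = (α : ℂ) * z := by
  classical
  set g : ℂ → ℂ := fun z => f z / z with hgdef
  have hfg : ∀ z : ℂ, z ≠ 0 → f z = g z * z := by
    intro z hz
    simp only [hgdef]
    rw [div_mul_cancel₀ _ hz]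
  -- `g` maps into the slit plane
  have key : ∀ z : ℂ, z ≠ 0 → g z ∈ Complex.slitPlane := by
    intro z hz
    rw [Complex.mem_slitPlane_iff]
    by_contra hc
    push_neg at hc
    obtain ⟨h1, h2⟩ := hc
    have hr : g z = ((g z).re : ℂ) := by
      apply Complex.ext <;> simp [h2]
    have hf' : f z = ((g z).re : ℂ) * z := by rw [hfg z hz, ← hr]
    have hre : (f z).re = (g z).re * z.re := by rw [hf']; simp
    have him : (f z).im = (g z).re * z.im := by rw [hf']; simp
    rcases lt_trichotomy z.re 0 with h | h | h
    · have := hL z h; nlinarith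
    · rcases lt_trichotomy z.im 0 with h' | h' | h'
      · have := hD z h'; nlinarith
      · exact hz (by apply Complex.ext <;> simp [h, h'])
      · have := hU z h'; nlinarith
    · have := hR z h; nlinarith
  have hgne : ∀ z : ℂ, z ≠ 0 → g z ≠ 0 := fun z hz =>
    Complex.slitPlane_ne_zero (key z hz)
  have hg : DifferentiableOn ℂ g {(0 : ℂ)}ᶜ :=
    hf.div (differentiableOn_id) (fun z hz => hz)
  -- square root of g
  set s : ℂ → ℂ := fun z => Complex.exp (Complex.log (g z) / 2) with hsdef
  have hs_re : ∀ z : ℂ, z ≠ 0 → 0 < (s z).re := by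
    intro z hz
    have h1 : -π < (Complex.log (g z)).im := Complex.neg_pi_lt_log_im _
    have h2 : (Complex.log (g z)).im < π := by
      have := Complex.log_im_le_pi (g z)
      have hne : (Complex.log (g z)).im ≠ π := by
        rw [Complex.log_im]
        exact Complex.slitPlane_arg_ne_pi (key z hz)
      exact lt_of_le_of_ne this hne
    have him : (Complex.log (g z) / 2).im = (Complex.log (g z)).im / 2 := by
      simp [Complex.div_im]
    rw [hsdef]
    simp only [Complex.exp_re]
    apply mul_pos (Real.exp_pos _)
    apply Real.cos_pos_of_mem_Ioo
    constructor <;> rw [him] <;> [linarith; linarith]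
  have hs_sq : ∀ z : ℂ, z ≠ 0 → s z ^ 2 = g z := by
    intro z hz
    rw [hsdef]
    simp only [sq, ← Complex.exp_add, ← add_div]
    norm_num
    exact Complex.exp_log (hgne z hz)
  have hs_diff : DifferentiableOn ℂ s {(0 : ℂ)}ᶜ := by
    apply DifferentiableOn.cexp
    exact (hg.clog (fun z hz => key z hz)).div_const 2
  -- Cayley transform of s
  set h : ℂ → ℂ := fun z => (s z - 1) / (s z + 1) with hhdef
  have hs1 : ∀ z : ℂ, z ≠ 0 → s z + 1 ≠ 0 := by
    intro z hz hc
    have := congrArg Complex.re hc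
    simp at this
    have := hs_re z hz
    linarith
  have hh_bdd : ∀ z : ℂ, z ≠ 0 → ‖h z‖ ≤ 1 := by
    intro z hz
    exact aux_cayley_le (hs_re z hz)
  have hh_diff : DifferentiableOn ℂ h {(0 : ℂ)}ᶜ :=
    (hs_diff.sub (differentiableOn_const 1)).div
      (hs_diff.add (differentiableOn_const 1)) (fun z hz => hs1 z hz)
  -- removable singularity + Liouville
  set F : ℂ → ℂ := Function.update h 0 (limUnder (𝓝[≠] (0:ℂ)) h) with hFdef
  have hF : Differentiable ℂ F := by
    rw [← differentiableOn_univ]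
    apply Complex.differentiableOn_update_limUnder_of_bddAbove (univ_mem)
    · exact hh_diff.mono (fun z hz => hz.2)
    · refine ⟨1, ?_⟩
      rintro x ⟨z, hz, rfl⟩
      exact hh_bdd z (by simpa using hz.2)
  have hF_eq : ∀ z : ℂ, z ≠ 0 → F z = h z := fun z hz =>
    Function.update_of_ne hz _ _
  have hF0 : ‖F 0‖ ≤ 1 := by
    have hc : ContinuousAt F 0 := hF.continuous.continuousAt
    have ht : Tendsto F (𝓝[≠] (0:ℂ)) (𝓝 (F 0)) :=
      hc.continuousWithinAt.tendsto
    have : Tendsto (fun z => ‖F z‖) (𝓝[≠] (0:ℂ)) (𝓝 ‖F 0‖) := ht.norm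
    apply le_of_tendsto this
    filter_upwards [self_mem_nhdsWithin] with z hz
    rw [hF_eq z hz]
    exact hh_bdd z hz
  have hF_bdd : IsBounded (Set.range F) := by
    rw [isBounded_iff_forall_norm_le]
    refine ⟨1, ?_⟩
    rintro x ⟨z, rfl⟩
    by_cases hz : z = 0
    · rw [hz]; exact hF0
    · rw [hF_eq z hz]; exact hh_bdd z hz
  have hh_const : ∀ z : ℂ, z ≠ 0 → h z = h 1 := by
    intro z hz
    have := hF.apply_eq_apply_of_bounded hF_bdd z 1
    rwa [hF_eq z hz, hF_eq 1 one_ne_zero] at this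
  -- s is constant
  have hs_const : ∀ z : ℂ, z ≠ 0 → s z = s 1 := by
    intro z hz
    have h1 := hh_const z hz
    rw [hhdef] at h1
    simp only at h1
    have e1 := hs1 z hz
    have e2 := hs1 1 one_ne_zero
    field_simp at h1
    linear_combination h1 / 2
  -- g is constant
  have hg_const : ∀ z : ℂ, z ≠ 0 → g z = g 1 := by
    intro z hz
    rw [← hs_sq z hz, ← hs_sq 1 one_ne_zero, hs_const z hz]
  have hc_eq : g 1 = f 1 := by simp [hgdef]
  have hmain : ∀ z : ℂ, z ≠ 0 → f z = f 1 * z := by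
    intro z hz
    rw [hfg z hz, hg_const z hz, hc_eq]
  -- show f 1 is a positive real
  have hre : 0 < (f 1).re := hR 1 (by norm_num)
  have him : (f 1).im = 0 := by
    rcases lt_trichotomy (f 1).im 0 with hlt | h0 | hgt
    · -- use hU with z = 1 + t*I
      set t : ℝ := -(f 1).im / (2 * (f 1).re) with htdef
      have ht : 0 < t := div_pos (by linarith) (by linarith)
      have htre : t * (f 1).re = -(f 1).im / 2 := by
        rw [htdef]; field_simp
      have hz : (1 + (t:ℂ) * I) ≠ 0 := by
        intro hc
        have := congrArg Complex.re hc
        simp at this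
      have h1 := hU (1 + (t:ℂ) * I) (by simp [ht])
      rw [hmain _ hz] at h1
      have h2 : (f 1 * (1 + (t:ℂ) * I)).im = (f 1).im + t * (f 1).re := by
        simp [Complex.mul_im]
        ring
      rw [h2, htre] at h1
      linarith
    · exact h0
    · -- use hD with z = 1 - t*I
      set t : ℝ := (f 1).im / (2 * (f 1).re) with htdef
      have ht : 0 < t := div_pos (by linarith) (by linarith)
      have htre : t * (f 1).re = (f 1).im / 2 := by
        rw [htdef]; field_simp
      have hz : (1 - (t:ℂ) * I) ≠ 0 := by
        intro hc
        have := congrArg Complex.re hc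
        simp at this
      have h1 := hD (1 - (t:ℂ) * I) (by simp [ht])
      rw [hmain _ hz] at h1
      have h2 : (f 1 * (1 - (t:ℂ) * I)).im = (f 1).im - t * (f 1).re := by
        simp [Complex.mul_im]
        ring
      rw [h2, htre] at h1
      linarith
  refine ⟨(f 1).re, hre, ?_⟩
  intro z hz
  rw [hmain z hz]
  congr 1
  apply Complex.ext <;> simp [him]
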